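/- Let f : ℕ → ℝ be any function with f(N) → ∞ as N → ∞. Then there exists N₀ such that for all N ≥ N₀ and all integers i with f(N) ≤ i ≤ N−1, the threshold sequence satisfies t_i^{(N)} ≤ (i + √i)/√(N − i + 3). -/

import Mathlib

open Filter Real

/-- Auxiliary backwards recurrence: `tAux N n` equals `t_{N-1-n}^{(N)}`, where
`t_{N-1} = N/2` and `t_{i-1} = (s_i²(s_i+1) + 2(i² − s_i²) t_i) / (2 i (i+1))`
with `s_i = ⌊t_i⌋`. -/
noncomputable def tAux (N : ℕ) : ℕ → ℝ
  | 0 => (N : ℝ) / 2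
  | n + 1 =>
      let i : ℝ := (N : ℝ) - 1 - (n : ℝ)
      let t : ℝ := tAux N n
      let s : ℝ := (⌊t⌋ : ℝ)
      (s ^ 2 * (s + 1) + 2 * (i ^ 2 - s ^ 2) * t) / (2 * i * (i + 1))

/-- The equilibrium threshold sequence `t_i^{(N)}` of the two-sided secretary game,
for `0 ≤ i ≤ N-1`. -/
noncomputable def tgame (N i : ℕ) : ℝ := tAux N (N - 1 - i)

set_option maxHeartbeats 1000000


lemma sqle (Y Z : ℝ) (hZ : 0 ≤ Z) (h : Y^2 ≤ Z^2) : Y ≤ Z := by nlinarith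

lemma hbb_lem (a b : ℝ) (ha : 31 ≤ a) (hb0 : 0 ≤ b) (hb2 : b^2 = a^2 - 1) :
    a^3 + a/2 - 1 ≤ (a^2+1)*b := by
  have e : ((a^2+1)*b)^2 = (a^2+1)^2*(a^2-1) := by rw [mul_pow, hb2]
  have h1 : (a^3 + a/2 - 1)^2 ≤ ((a^2+1)*b)^2 := by
    rw [e]; nlinarith [sq_nonneg a, mul_nonneg (mul_nonneg (by linarith : (0:ℝ) ≤ a) (by linarith : (0:ℝ) ≤ a)) (by linarith : (0:ℝ) ≤ a)]
  exact sqle _ _ (by positivity) h1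

lemma refined_num (i t s : ℝ) (ht2 : 2 ≤ t) (hs1 : s ≤ t) (hs2 : t - 1 < s) (hs0 : 0 ≤ s) :
    s^2*(s+1) + 2*(i^2 - s^2)*t ≤ 2*i^2*t - t*(t-1)^2 := by
  nlinarith [mul_nonneg (mul_nonneg (by linarith : (0:ℝ) ≤ s - t + 1) (by linarith : (0:ℝ) ≤ t)) (by linarith : (0:ℝ) ≤ t - 1),
    mul_nonneg (mul_nonneg (by linarith : (0:ℝ) ≤ s - t + 1) (by linarith : (0:ℝ) ≤ t - s)) hs0]

lemma crude_num (i t : ℝ) (ht0 : 0 ≤ t) :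
    ((⌊t⌋:ℝ))^2*(((⌊t⌋:ℝ))+1) + 2*(i^2 - ((⌊t⌋:ℝ))^2)*t ≤ 2*i^2*t := by
  rcases lt_or_ge t 1 with h1 | h1
  · have hz : ⌊t⌋ = 0 := Int.floor_eq_zero_iff.mpr ⟨ht0, h1⟩
    rw [hz]; norm_num
  · have hs1 : ((⌊t⌋:ℝ)) ≤ t := Int.floor_le t
    have hs0 : (0:ℝ) ≤ ((⌊t⌋:ℝ)) := by exact_mod_cast Int.floor_nonneg.mpr ht0
    nlinarith [mul_nonneg (mul_nonneg hs0 hs0) (by linarith : (0:ℝ) ≤ 2*t - ((⌊t⌋:ℝ)) - 1)]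



lemma polyA (a p q b : ℝ) (ha : 31 ≤ a) (hp : 2 ≤ p) (hq0 : 0 ≤ q)
    (hqp : 2*p*q ≤ 2*p^2+1) (hb : a^3 + a/2 - 1 ≤ (a^2+1)*b) (hpa : a^2/4 ≤ p) :
    a^2*(a^2+a)*q ≤ (a^2-1+b)*(a^2+1)*p := by
  have hp0 : (0:ℝ) < p := by linarith
  have h1 : a^2*(a^2+a)*(2*p*q) ≤ a^2*(a^2+a)*(2*p^2+1) := by
    apply mul_le_mul_of_nonneg_left hqp; nlinarith
  have hsq : a^4/16 ≤ p^2 := by nlinarith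
  have h5 : a^4 + a^3 ≤ (a^4/16)*(a-4) := by
    have h6 : 20*a + 16 ≤ a^2 := by nlinarith
    nlinarith [mul_le_mul_of_nonneg_left h6 (by positivity : (0:ℝ) ≤ a^3/16)]
  have hkey : a^4 + a^3 ≤ p^2*(a-4) := by
    nlinarith [mul_le_mul_of_nonneg_right hsq (by linarith : (0:ℝ) ≤ a-4)]
  have h2 : a^2*(a^2+a)*(2*p^2+1) ≤ (2*p)*((a^2-1+b)*(a^2+1)*p) := by
    nlinarith [mul_le_mul_of_nonneg_left hb (by positivity : (0:ℝ) ≤ 2*p^2)]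
  have h3 : (2*p)*(a^2*(a^2+a)*q) ≤ (2*p)*((a^2-1+b)*(a^2+1)*p) := by nlinarith [h1, h2]
  exact le_of_mul_le_mul_left h3 (by linarith)

lemma polyB (a p q b : ℝ) (ha : 31 ≤ a) (hp : 2 ≤ p) (hpa : p ≤ a^2/4) (hq0 : 0 ≤ q)
    (hqp : 2*p*q ≤ 2*p^2+1) (hb : a^3 + a/2 - 1 ≤ (a^2+1)*b) :
    q * (2*a^4*(a^2+a)*p^2 - (a^2+a)^3 + 2*p*(a^2+a)^2) ≤ 2*a^2*(a^2+1)*(a^2-1+b) * p^3 := by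
  have hp0 : (0:ℝ) < p := by linarith
  have ha0 : (0:ℝ) < a := by linarith
  have hX0 : (0:ℝ) ≤ a^2+a := by positivity
  have hX : (a^2+a)^2 ≤ 4*a^4 := by nlinarith
  have hpp : (4:ℝ) ≤ p^2 := by nlinarith
  have hBr0 : (0:ℝ) ≤ 2*a^4*(a^2+a)*p^2 - (a^2+a)^3 + 2*p*(a^2+a)^2 := by
    have k1 : (0:ℝ) ≤ (a^2+a)*(4*a^4 - (a^2+a)^2) := mul_nonneg hX0 (by linarith)
    have k2 : (0:ℝ) ≤ (a^2+a)*(p^2-4)*(2*a^4) := by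
      apply mul_nonneg (mul_nonneg hX0 (by linarith)); positivity
    have k3 : (0:ℝ) ≤ p*(a^2+a)^2 := by positivity
    have k4 : (0:ℝ) ≤ 4*a^4*(a^2+a) := by positivity
    nlinarith [k1, k2, k3, k4]
  have h1 : (2*p*q) * (2*a^4*(a^2+a)*p^2 - (a^2+a)^3 + 2*p*(a^2+a)^2)
      ≤ (2*p^2+1) * (2*a^4*(a^2+a)*p^2 - (a^2+a)^3 + 2*p*(a^2+a)^2) :=
    mul_le_mul_of_nonneg_right hqp hBr0
  have hQ : (0:ℝ) ≤ 2*a^2*(a-4)*p^2 - 4*(a^2+a)^2*p + 2*a^3*(a+1)*(2*a+1) := by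
    have hdisc : (4*(a^2+a)^2)^2 ≤ 4*(2*a^2*(a-4))*(2*a^3*(a+1)*(2*a+1)) := by
      have h7 : 10*a^2 + 7*a + 1 ≤ a^3 := by nlinarith
      nlinarith [mul_le_mul_of_nonneg_left h7 (by positivity : (0:ℝ) ≤ 16*a^4*(a+1))]
    nlinarith [sq_nonneg (2*(2*a^2*(a-4))*p - 4*(a^2+a)^2), hdisc,
      (by nlinarith : (0:ℝ) < 2*a^2*(a-4))]
  have h2 : (2*p^2+1) * (2*a^4*(a^2+a)*p^2 - (a^2+a)^3 + 2*p*(a^2+a)^2)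
      ≤ 4*a^2*p^4*(a^4+a^3+a/2-2) := by
    have k1 : (0:ℝ) ≤ p^2*(2*a^2*(a-4)*p^2 - 4*(a^2+a)^2*p + 2*a^3*(a+1)*(2*a+1)) :=
      mul_nonneg (sq_nonneg p) hQ
    have k2 : (0:ℝ) ≤ (a^2+a)^2*((a^2+a)-2*p) := mul_nonneg (sq_nonneg _) (by nlinarith)
    linarith [k1, k2]
  have h3 : 4*a^2*p^4*(a^4+a^3+a/2-2) ≤ (2*p)*(2*a^2*(a^2+1)*(a^2-1+b) * p^3) := by
    nlinarith [mul_le_mul_of_nonneg_left hb (by positivity : (0:ℝ) ≤ 4*a^2*p^4)]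
  have h4 : (2*p)*(q * (2*a^4*(a^2+a)*p^2 - (a^2+a)^3 + 2*p*(a^2+a)^2))
      ≤ (2*p)*(2*a^2*(a^2+1)*(a^2-1+b) * p^3) := by
    have e : (2*p)*(q * (2*a^4*(a^2+a)*p^2 - (a^2+a)^3 + 2*p*(a^2+a)^2))
        = (2*p*q) * (2*a^4*(a^2+a)*p^2 - (a^2+a)^3 + 2*p*(a^2+a)^2) := by ring
    rw [e]; linarith [h1, h2, h3]
  exact le_of_mul_le_mul_left h4 (by linarith)

lemma step_lemma (i m t : ℝ) (hi : 1001 ≤ i) (hm : 4 ≤ m)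
    (ht0 : 0 ≤ t) (ht : t ≤ (i + Real.sqrt i) / Real.sqrt m) :
    0 ≤ ((⌊t⌋:ℝ)^2 * ((⌊t⌋:ℝ)+1) + 2*(i^2 - (⌊t⌋:ℝ)^2)*t) / (2*i*(i+1)) ∧
    ((⌊t⌋:ℝ)^2 * ((⌊t⌋:ℝ)+1) + 2*(i^2 - (⌊t⌋:ℝ)^2)*t) / (2*i*(i+1))
      ≤ (i - 1 + Real.sqrt (i-1)) / Real.sqrt (m+1) := by
  obtain ⟨a, ha0, rfl⟩ : ∃ a, 0 ≤ a ∧ a^2 = i :=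
    ⟨Real.sqrt i, Real.sqrt_nonneg i, Real.sq_sqrt (by linarith)⟩
  obtain ⟨p, hp0, rfl⟩ : ∃ p, 0 ≤ p ∧ p^2 = m :=
    ⟨Real.sqrt m, Real.sqrt_nonneg m, Real.sq_sqrt (by linarith)⟩
  rw [Real.sqrt_sq ha0, Real.sqrt_sq hp0] at ht
  have ha : 31 ≤ a := by nlinarith
  have hp : 2 ≤ p := by nlinarith
  have hpp : (0:ℝ) < p := by linarith
  set b := Real.sqrt (a^2-1) with hbdef
  have hb0 : 0 ≤ b := Real.sqrt_nonneg _
  have hb2 : b^2 = a^2-1 := Real.sq_sqrt (by nlinarith)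
  set q := Real.sqrt (p^2+1) with hqdef
  have hq0 : 0 ≤ q := Real.sqrt_nonneg _
  have hq2 : q^2 = p^2+1 := Real.sq_sqrt (by nlinarith)
  have hq1 : 2 ≤ q := by nlinarith
  have hqp : 2*p*q ≤ 2*p^2+1 := by nlinarith [sq_nonneg (q-p)]
  have hbb := hbb_lem a b ha hb0 hb2
  have htp : t*p ≤ a^2+a := by
    rw [le_div_iff₀ hpp] at ht; linarith
  have hs1 : ((⌊t⌋:ℝ)) ≤ t := Int.floor_le t
  have hs0 : (0:ℝ) ≤ ((⌊t⌋:ℝ)) := by exact_mod_cast Int.floor_nonneg.mpr ht0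
  have hs2 : t - 1 < ((⌊t⌋:ℝ)) := Int.sub_one_lt_floor t
  have hti : t ≤ a^2 := by nlinarith
  have hD : (0:ℝ) < 2*a^2*(a^2+1) := by positivity
  have hnum0 : 0 ≤ (⌊t⌋:ℝ)^2 * ((⌊t⌋:ℝ)+1) + 2*((a^2)^2 - (⌊t⌋:ℝ)^2)*t := by
    nlinarith [mul_nonneg (mul_nonneg (by linarith : (0:ℝ) ≤ a^2 - (⌊t⌋:ℝ)) (by linarith : (0:ℝ) ≤ a^2 + (⌊t⌋:ℝ))) ht0,
      mul_nonneg (mul_nonneg hs0 hs0) (by linarith : (0:ℝ) ≤ (⌊t⌋:ℝ)+1)]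
  constructor
  · exact div_nonneg hnum0 (by positivity)
  rw [div_le_div_iff₀ hD (by linarith : (0:ℝ) < q)]
  have crude := crude_num (a^2) t ht0
  rcases le_total (a^2/4) p with hcase | hcase
  · -- case A : p large
    have hA := polyA a p q b ha hp hq0 hqp hbb hcase
    have c1 : ((⌊t⌋:ℝ)^2 * ((⌊t⌋:ℝ)+1) + 2*((a^2)^2 - (⌊t⌋:ℝ)^2)*t) * q ≤ (2*(a^2)^2*t)*q :=
      mul_le_mul_of_nonneg_right crude hq0
    have c1' := mul_le_mul_of_nonneg_right c1 hpp.le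
    have c2 : (2*(a^2)^2)*(t*p)*q ≤ (2*(a^2)^2)*(a^2+a)*q :=
      mul_le_mul_of_nonneg_right (mul_le_mul_of_nonneg_left htp (by positivity)) hq0
    have c3 : 2*a^2*(a^2*(a^2+a)*q) ≤ 2*a^2*((a^2-1+b)*(a^2+1)*p) :=
      mul_le_mul_of_nonneg_left hA (by positivity)
    have cfin : (((⌊t⌋:ℝ)^2 * ((⌊t⌋:ℝ)+1) + 2*((a^2)^2 - (⌊t⌋:ℝ)^2)*t) * q) * p
        ≤ ((a^2-1+b) * (2*a^2*(a^2+1))) * p := by linarith [c1', c2, c3]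
    exact le_of_mul_le_mul_right cfin hpp
  · -- case B : p small
    have h2q : 2*q ≤ a^2 - 1 := by
      have hq4 : q ≤ a^2/4 + 1 := by
        apply sqle q _ (by positivity)
        rw [hq2]; nlinarith
      nlinarith
    rcases le_total t 2 with ht2 | ht2
    · -- t small
      have c1 : ((⌊t⌋:ℝ)^2 * ((⌊t⌋:ℝ)+1) + 2*((a^2)^2 - (⌊t⌋:ℝ)^2)*t) * q ≤ (2*(a^2)^2*t)*q :=
        mul_le_mul_of_nonneg_right crude hq0
      have c2 : (2*(a^2)^2*t)*q ≤ (2*(a^2)^2*2)*q :=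
        mul_le_mul_of_nonneg_right (by nlinarith) hq0
      have c3 : (2*(a^2)^2)*(2*q) ≤ (2*(a^2)^2)*(a^2-1) :=
        mul_le_mul_of_nonneg_left h2q (by positivity)
      have c4 : (0:ℝ) ≤ b * (2*a^2*(a^2+1)) := by positivity
      have c5 : a^2 ≤ a^4 := by nlinarith
      linarith [c1, c2, c3, c4, c5]
    · -- t large
      have refined := refined_num (a^2) t ((⌊t⌋:ℝ)) ht2 hs1 hs2 hs0
      set C : ℝ := (a^2+a)/p with hC
      have htC : t ≤ C := ht
      have hC2 : 2 ≤ C := le_trans ht2 htC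
      have hCle : 2*C ≤ a^2+a := by
        have : C*(p-2) ≥ 0 := mul_nonneg (by linarith) (by linarith)
        have hCp : C*p = a^2+a := by rw [hC, div_mul_cancel₀ _ hpp.ne']
        nlinarith [this, hCp]
      have haa : 31*a ≤ a^2 := by nlinarith
      have e1 : 4*C^2 ≤ (a^2+a)^2 := by
        nlinarith [mul_nonneg (by linarith : (0:ℝ) ≤ a^2+a-2*C) (by linarith : (0:ℝ) ≤ a^2+a+2*C)]
      have e2 : 31*a^3 ≤ a^4 := by nlinarith [mul_nonneg (by linarith : (0:ℝ) ≤ a^2-31*a) (sq_nonneg a)]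
      have e3 : 961*a^2 ≤ a^4 := by
        nlinarith [e2, mul_le_mul_of_nonneg_left haa (show (0:ℝ) ≤ 31*a by linarith)]
      have mfac : (0:ℝ) ≤ 2*(a^2)^2 - (C^2+C*t+t^2) + 2*C+2*t-1 := by
        have p1 : (0:ℝ) ≤ (C-t)*t := mul_nonneg (by linarith) (by linarith)
        have p2 : (0:ℝ) ≤ (C-t)*C := mul_nonneg (by linarith) (by linarith)
        nlinarith [e1, e2, e3, p1, p2]
      have mono : 2*(a^2)^2*t - t*(t-1)^2 ≤ 2*(a^2)^2*C - C*(C-1)^2 := by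
        linarith [mul_nonneg (by linarith : (0:ℝ) ≤ C - t) mfac]
      have hB := polyB a p q b ha hp hcase hq0 hqp hbb
      have hid : (2*(a^2)^2*C - C*(C-1)^2) * p^3
          = 2*a^4*(a^2+a)*p^2 - (a^2+a)*((a^2+a)-p)^2 := by
        rw [hC]; field_simp
      have hle : 2*a^4*(a^2+a)*p^2 - (a^2+a)*((a^2+a)-p)^2
          ≤ 2*a^4*(a^2+a)*p^2 - (a^2+a)^3 + 2*p*(a^2+a)^2 := by
        linarith [mul_nonneg (by positivity : (0:ℝ) ≤ a^2+a) (sq_nonneg p)]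
      have big : (2*(a^2)^2*C - C*(C-1)^2) * q ≤ (a^2-1+b)*(2*a^2*(a^2+1)) := by
        have c1 : q * ((2*(a^2)^2*C - C*(C-1)^2) * p^3)
            ≤ q * (2*a^4*(a^2+a)*p^2 - (a^2+a)^3 + 2*p*(a^2+a)^2) := by
          rw [hid]; exact mul_le_mul_of_nonneg_left hle hq0
        have c2 : ((2*(a^2)^2*C - C*(C-1)^2) * q) * p^3
            ≤ ((a^2-1+b)*(2*a^2*(a^2+1))) * p^3 := by linarith [c1, hB]
        exact le_of_mul_le_mul_right c2 (by positivity)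
      have d1 : ((⌊t⌋:ℝ)^2 * ((⌊t⌋:ℝ)+1) + 2*((a^2)^2 - (⌊t⌋:ℝ)^2)*t) * q
          ≤ (2*(a^2)^2*t - t*(t-1)^2)*q := mul_le_mul_of_nonneg_right refined hq0
      have d2 : (2*(a^2)^2*t - t*(t-1)^2)*q ≤ (2*(a^2)^2*C - C*(C-1)^2)*q :=
        mul_le_mul_of_nonneg_right mono hq0
      linarith [d1, d2, big]

lemma invariant (N : ℕ) : ∀ n : ℕ, (1001:ℝ) ≤ (N:ℝ) - 1 - n →
    0 ≤ tAux N n ∧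
    tAux N n ≤ (((N:ℝ)-1-n) + Real.sqrt ((N:ℝ)-1-n)) / Real.sqrt ((n:ℝ)+4) := by
  intro n
  induction n with
  | zero =>
    intro hn
    have hN : (1002:ℝ) ≤ (N:ℝ) := by push_cast at hn; linarith
    have e0 : (((0:ℕ):ℝ)) = 0 := by norm_num
    have h4 : Real.sqrt (((0:ℕ):ℝ)+4) = 2 := by
      rw [e0, show ((0:ℝ)+4) = 2^2 by norm_num, Real.sqrt_sq (by norm_num)]
    have h1 : (1:ℝ) ≤ Real.sqrt ((N:ℝ)-1-((0:ℕ):ℝ)) := by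
      have := Real.sqrt_le_sqrt (show (1:ℝ) ≤ (N:ℝ)-1-((0:ℕ):ℝ) by rw [e0]; linarith)
      rwa [Real.sqrt_one] at this
    have hs0 : 0 ≤ Real.sqrt ((N:ℝ)-1-((0:ℕ):ℝ)) := Real.sqrt_nonneg _
    constructor
    · show (0:ℝ) ≤ (N:ℝ)/2
      positivity
    · show (N:ℝ)/2 ≤ ((N:ℝ)-1-((0:ℕ):ℝ) + Real.sqrt ((N:ℝ)-1-((0:ℕ):ℝ))) / Real.sqrt (((0:ℕ):ℝ)+4)
      rw [h4]; rw [e0] at h1 hs0 ⊢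
      rw [div_le_div_iff₀ (by norm_num : (0:ℝ) < 2) (by norm_num : (0:ℝ) < 2)]
      nlinarith [h1]
  | succ n ih =>
    intro hn
    have hn' : (1001:ℝ) ≤ (N:ℝ) - 1 - n := by push_cast at hn ⊢; linarith
    obtain ⟨ih0, ih1⟩ := ih hn'
    have key := step_lemma ((N:ℝ)-1-(n:ℝ)) ((n:ℝ)+4) (tAux N n) hn' (by linarith [show (0:ℝ) ≤ (n:ℝ) from Nat.cast_nonneg n] : (4:ℝ) ≤ (n:ℝ)+4) ih0 ih1
    have e1 : (N:ℝ)-1-((n:ℕ)+1 : ℕ) = ((N:ℝ)-1-(n:ℝ)) - 1 := by push_cast; ring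
    have e2 : (((n:ℕ)+1 : ℕ) : ℝ) + 4 = ((n:ℝ)+4) + 1 := by push_cast; ring
    have hunf : tAux N (n+1) = (((⌊tAux N n⌋:ℝ))^2 * ((⌊tAux N n⌋:ℝ)+1)
        + 2*((((N:ℝ)-1-(n:ℝ))^2 - (⌊tAux N n⌋:ℝ)^2))*(tAux N n))
        / (2*((N:ℝ)-1-(n:ℝ))*(((N:ℝ)-1-(n:ℝ))+1)) := by
      show tAux N (n+1) = _
      rw [tAux]
    constructor
    · rw [hunf]; exact key.1
    · rw [hunf, e1, e2]; exact key.2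

theorem threshold_upper_bound (f : ℕ → ℝ) (hf : Tendsto f atTop atTop) :
    ∃ N₀ : ℕ, ∀ N : ℕ, N₀ ≤ N → ∀ i : ℕ,
      f N ≤ (i : ℝ) → (i : ℝ) ≤ (N : ℝ) - 1 →
      tgame N i ≤ ((i : ℝ) + Real.sqrt i) / Real.sqrt ((N : ℝ) - i + 3) := by
  have hev := hf.eventually_ge_atTop 1001
  rw [eventually_atTop] at hev
  obtain ⟨N₀, hN₀⟩ := hev
  refine ⟨N₀, fun N hN i hfi hiN => ?_⟩
  have hi1001 : (1001:ℝ) ≤ (i:ℝ) := le_trans (hN₀ N hN) hfi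
  have hNi : i + 1 ≤ N := by
    by_contra h
    push_neg at h
    have : (N:ℝ) ≤ (i:ℝ) := by exact_mod_cast Nat.lt_succ_iff.mp h
    linarith
  have hrn : ((N - 1 - i : ℕ) : ℝ) = (N:ℝ) - 1 - (i:ℝ) := by
    have h1 : N - 1 - i = N - (1 + i) := by omega
    rw [h1, Nat.cast_sub (by omega)]
    push_cast; ring
  have key := invariant N (N - 1 - i) (by rw [hrn]; linarith)
  have e1 : (N:ℝ) - 1 - ((N - 1 - i : ℕ):ℝ) = (i:ℝ) := by rw [hrn]; ring
  have e2 : ((N - 1 - i : ℕ):ℝ) + 4 = (N:ℝ) - (i:ℝ) + 3 := by rw [hrn]; ring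
  rw [e1, e2] at key
  exact key.2
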